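/- Let n₁,…,n_m be positive integers summing to T, and for i ∈ [m], k ∈ [nᵢ] let B_{i,k} be T × T complex diagonal matrices such that all square submatrices of Bᵢ = [B_{i,1}𝟙,…,B_{i,nᵢ}𝟙] are invertible. Let Ξ₁,…,Ξ_m be independent random vectors in ℂ^T whose real and imaginary coordinate parts are i.i.d. with a distribution absolutely continuous w.r.t. Lebesgue measure. Then, with probability 1, the T × T matrix Λ = [A₁,…,A_m], where Aᵢ = [B_{i,1}Ξᵢ,…,B_{i,nᵢ}Ξᵢ], is invertible. -/

import Mathlib

open MeasureTheory

namespace Stmt10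

open MvPolynomial

lemma measurable_eval {σv : Type*} (p : MvPolynomial σv ℂ) :
    Measurable fun x : σv → ℂ => MvPolynomial.eval x p := by
  have h : (fun x : σv → ℂ => MvPolynomial.eval x p) =
      fun x => ∑ d ∈ p.support, coeff d p * ∏ i ∈ d.support, x i ^ d i := by
    funext x; rw [eval_eq]
  rw [h]
  exact Finset.measurable_sum _ fun d _ =>
    (Finset.measurable_prod _ fun i _ => (measurable_pi_apply i).pow_const _).const_mul _

lemma measure_eval_zero : ∀ (N : ℕ) (μ : Fin N → Measure ℂ),
    (∀ i, IsProbabilityMeasure (μ i)) → (∀ i, μ i ≪ volume) →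
    ∀ (p : MvPolynomial (Fin N) ℂ), p ≠ 0 →
    Measure.pi μ {x | MvPolynomial.eval x p = 0} = 0 := by
  intro N
  induction N with
  | zero =>
    intro μ _ _ p hp
    obtain ⟨a, rfl⟩ := C_surjective (Fin 0) p
    have ha : a ≠ 0 := by rintro rfl; simp at hp
    have h : {x : Fin 0 → ℂ | MvPolynomial.eval x (C a) = 0} = ∅ := by
      ext x; simp [ha]
    rw [h]; simp
  | succ N ih =>
    intro μ hprob hac p hp
    haveI := hprob
    set q := finSuccEquiv ℂ N p with hqdef
    have hq : q ≠ 0 := by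
      intro h
      apply hp
      have h2 := congrArg (finSuccEquiv ℂ N).symm (hqdef ▸ h)
      simpa using h2
    obtain ⟨k, hk⟩ : ∃ k, q.coeff k ≠ 0 := by
      by_contra h
      push_neg at h
      exact hq (Polynomial.ext fun k => by simp [h k])
    set ν' : Fin N → Measure ℂ := fun j => μ ((0 : Fin (N+1)).succAbove j) with hν'
    haveI : ∀ j, IsProbabilityMeasure (ν' j) := fun j => hprob _
    have hmeasMid : MeasurableSet {y : ℂ × (Fin N → ℂ) | MvPolynomial.eval (Fin.cons y.1 y.2) p = 0} := by
      have hco : Measurable fun y : ℂ × (Fin N → ℂ) => MvPolynomial.eval (Fin.cons y.1 y.2 : Fin (N+1) → ℂ) p := by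
        apply (measurable_eval p).comp
        apply measurable_pi_iff.mpr
        intro j
        refine Fin.cases ?_ ?_ j
        · simpa using measurable_fst
        · intro j'; have h : Measurable fun x : ℂ × (Fin N → ℂ) => x.2 j' := (measurable_pi_apply j').comp measurable_snd; simpa using h
      exact hco (measurableSet_singleton 0)
    have hmeasSwap : MeasurableSet {y : (Fin N → ℂ) × ℂ | MvPolynomial.eval (Fin.cons y.2 y.1) p = 0} := by
      have hco : Measurable fun y : (Fin N → ℂ) × ℂ => MvPolynomial.eval (Fin.cons y.2 y.1 : Fin (N+1) → ℂ) p := by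
        apply (measurable_eval p).comp
        apply measurable_pi_iff.mpr
        intro j
        refine Fin.cases ?_ ?_ j
        · simpa using measurable_snd
        · intro j'; have h : Measurable fun x : (Fin N → ℂ) × ℂ => x.1 j' := (measurable_pi_apply j').comp measurable_fst; simpa using h
      exact hco (measurableSet_singleton 0)
    have key : Measure.pi μ {x | MvPolynomial.eval x p = 0}
        = ((μ 0).prod (Measure.pi ν'))
            {y : ℂ × (Fin N → ℂ) | MvPolynomial.eval (Fin.cons y.1 y.2) p = 0} := by
      rw [← (measurePreserving_piFinSuccAbove μ 0).measure_preimage hmeasMid.nullMeasurableSet]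
      congr 1
      ext x
      simp only [Set.mem_preimage, Set.mem_setOf_eq, MeasurableEquiv.piFinSuccAbove_apply,
        Fin.insertNthEquiv_symm_apply]
      rw [Fin.removeNth_zero, Fin.cons_self_tail]
    have keySwap : ((μ 0).prod (Measure.pi ν'))
          {y : ℂ × (Fin N → ℂ) | MvPolynomial.eval (Fin.cons y.1 y.2) p = 0}
        = ((Measure.pi ν').prod (μ 0))
            {y : (Fin N → ℂ) × ℂ | MvPolynomial.eval (Fin.cons y.2 y.1) p = 0} := by
      conv_rhs => rw [← Measure.prod_swap]
      rw [Measure.map_apply measurable_swap hmeasSwap]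
      rfl
    rw [key, keySwap]
    rw [Measure.measure_prod_null hmeasSwap]
    have hae : ∀ᵐ s ∂(Measure.pi ν'), MvPolynomial.eval s (q.coeff k) ≠ 0 := by
      have h0 := ih ν' (fun j => hprob _) (fun j => hac _) (q.coeff k) hk
      exact measure_eq_zero_iff_ae_notMem.mp h0
    filter_upwards [hae] with s hs
    have hps : Polynomial.map (MvPolynomial.eval s) q ≠ 0 := by
      intro h
      apply hs
      have := congrArg (fun r => Polynomial.coeff r k) h
      simpa [Polynomial.coeff_map] using this
    have hroots : {a : ℂ | MvPolynomial.eval (Fin.cons a s : Fin (N+1) → ℂ) p = 0}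
        = {a : ℂ | (Polynomial.map (MvPolynomial.eval s) q).IsRoot a} := by
      ext a
      simp only [Set.mem_setOf_eq, Polynomial.IsRoot.def]
      rw [eval_eq_eval_mv_eval']
    have hfin : ({a : ℂ | (Polynomial.map (MvPolynomial.eval s) q).IsRoot a}).Finite :=
      Polynomial.finite_setOf_isRoot hps
    show μ 0 (Prod.mk s ⁻¹' {y : (Fin N → ℂ) × ℂ | MvPolynomial.eval (Fin.cons y.2 y.1) p = 0}) = 0
    have hpre : Prod.mk s ⁻¹' {y : (Fin N → ℂ) × ℂ | MvPolynomial.eval (Fin.cons y.2 y.1) p = 0}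
        = {a : ℂ | MvPolynomial.eval (Fin.cons a s : Fin (N+1) → ℂ) p = 0} := rfl
    rw [hpre, hroots]
    exact hac 0 (hfin.measure_zero volume)


open MvPolynomial

lemma prod_monomial {σv ι : Type*} [DecidableEq ι] (s : Finset ι) (f : ι → (σv →₀ ℕ)) (a : ι → ℂ) :
    ∏ i ∈ s, (monomial (f i) (a i) : MvPolynomial σv ℂ)
      = monomial (∑ i ∈ s, f i) (∏ i ∈ s, a i) := by
  induction s using Finset.induction_on with
  | empty => simp [monomial_zero']
  | insert _ _ hnotmem ih =>
    rw [Finset.prod_insert hnotmem, Finset.sum_insert hnotmem, Finset.prod_insert hnotmem, ih,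
      monomial_mul]

lemma det_poly_ne_zero (T m : ℕ) (n : Fin m → ℕ)
    (e : (Σ i, Fin (n i)) ≃ Fin T)
    (B : (i : Fin m) → Fin (n i) → Matrix (Fin T) (Fin T) ℂ)
    (hB : ∀ (i : Fin m) (s : ℕ) (ρ : Fin s → Fin T) (σ : Fin s → Fin (n i)),
      Function.Injective ρ → Function.Injective σ →
      IsUnit (Matrix.det (Matrix.of fun a b => (B i (σ b)).mulVec 1 (ρ a)))) :
    (Matrix.det (Matrix.of fun t s : Fin T =>
      (C ((B (e.symm s).1 (e.symm s).2).mulVec 1 t) : MvPolynomial (Fin m × Fin T) ℂ)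
        * X ((e.symm s).1, t))) ≠ 0 := by
  classical
  set blk : Fin T → Fin m := fun s => (e.symm s).1 with hblk
  set c : Fin T → Fin T → ℂ := fun t s => (B (e.symm s).1 (e.symm s).2).mulVec 1 t with hc
  set M : Matrix (Fin T) (Fin T) (MvPolynomial (Fin m × Fin T) ℂ) :=
    Matrix.of fun t s => (C (c t s)) * X (blk s, t) with hM
  set d0 : (Fin m × Fin T) →₀ ℕ := ∑ t : Fin T, Finsupp.single (blk t, t) 1 with hd0
  have hdd_apply : ∀ (σ : Equiv.Perm (Fin T)) (j : Fin m) (r : Fin T),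
      (∑ t : Fin T, Finsupp.single ((blk t, σ t)) (1:ℕ)) (j, r)
        = if blk (σ⁻¹ r) = j then 1 else 0 := by
    intro σ j r
    rw [Finsupp.finset_sum_apply]
    rw [Finset.sum_eq_single (σ⁻¹ r)]
    · simp [Finsupp.single_apply, Equiv.Perm.inv_def, Equiv.apply_symm_apply, Prod.ext_iff]
    · intro t _ ht
      rw [Finsupp.single_apply, if_neg]
      rintro hEq
      apply ht
      rw [Prod.mk.injEq] at hEq
      rw [← hEq.2, Equiv.Perm.inv_def, Equiv.symm_apply_apply]
    · intro h; exact absurd (Finset.mem_univ _) h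
  have hval : ∀ (j : Fin m) (r : Fin T), d0 (j, r) = if blk r = j then 1 else 0 := by
    intro j r
    rw [hd0]
    have h := hdd_apply 1 j r
    simpa using h
  have hd_eq : ∀ σ : Equiv.Perm (Fin T),
      ((∑ t : Fin T, Finsupp.single (blk t, σ t) (1:ℕ)) = d0) ↔ ∀ t, blk (σ t) = blk t := by
    intro σ
    constructor
    · intro h t
      have h1 := DFunLike.congr_fun h (blk (σ t), σ t)
      rw [hdd_apply σ, hval] at h1
      simp only [Equiv.Perm.inv_def, Equiv.symm_apply_apply, if_pos rfl] at h1
      by_contra hne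
      rw [if_neg (fun hEq => hne hEq.symm)] at h1
      exact one_ne_zero h1.symm
    · intro h
      apply Finsupp.ext
      rintro ⟨j, r⟩
      rw [hdd_apply σ j r, hval j r]
      have hcond : blk (σ⁻¹ r) = blk r := by
        have h2 := h (σ⁻¹ r)
        rw [Equiv.Perm.inv_def, Equiv.apply_symm_apply] at h2
        exact h2.symm
      rw [hcond]
  have hterm : ∀ σ : Equiv.Perm (Fin T), (∏ t : Fin T, M (σ t) t)
      = monomial (∑ t : Fin T, Finsupp.single (blk t, σ t) 1) (∏ t : Fin T, c (σ t) t) := by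
    intro σ
    rw [← prod_monomial]
    apply Finset.prod_congr rfl
    intro t _
    show (C (c (σ t) t)) * X (blk t, σ t) = _
    rw [C_mul_X_eq_monomial]
  set C' : Matrix (Fin T) (Fin T) ℂ :=
    Matrix.of (fun t s : Fin T => if blk t = blk s then c t s else 0) with hC'def
  have hcoeff : MvPolynomial.coeff d0 (M.det) = C'.det := by
    rw [Matrix.det_apply, Matrix.det_apply, coeff_sum]
    apply Finset.sum_congr rfl
    intro σ _
    rw [Units.smul_def, Units.smul_def, coeff_smul, hterm σ, coeff_monomial]
    congr 1
    by_cases hσ : ∀ t, blk (σ t) = blk t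
    · rw [if_pos ((hd_eq σ).mpr hσ)]
      apply Finset.prod_congr rfl
      intro t _
      show c (σ t) t = C' (σ t) t
      show c (σ t) t = if blk (σ t) = blk t then c (σ t) t else 0
      rw [if_pos (hσ t)]
    · rw [if_neg (fun h => hσ ((hd_eq σ).mp h))]
      symm
      push_neg at hσ
      obtain ⟨t0, ht0⟩ := hσ
      apply Finset.prod_eq_zero (Finset.mem_univ t0)
      show (if blk (σ t0) = blk t0 then c (σ t0) t0 else 0) = 0
      rw [if_neg ht0]
  have hfib : ∀ (i : Fin m) (k : Fin (n i)), blk (e ⟨i, k⟩) = i := by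
    intro i k; simp [hblk]
  have hCne : C'.det ≠ 0 := by
    have htri : C'.BlockTriangular blk := by
      intro t s hlt
      show (if blk t = blk s then c t s else 0) = 0
      exact if_neg (ne_of_gt hlt)
    rw [htri.det]
    apply Finset.prod_ne_zero_iff.mpr
    intro i _
    let Ei : Fin (n i) ≃ {t : Fin T // blk t = i} :=
      { toFun := fun k => ⟨e ⟨i, k⟩, hfib i k⟩
        invFun := fun t => Fin.cast (congrArg n t.2) (e.symm t.1).2
        left_inv := fun k => by
          apply Fin.ext
          simp only [Fin.coe_cast]
          exact congrArg (fun x : (Σ j, Fin (n j)) => (x.snd : ℕ)) (e.symm_apply_apply ⟨i, k⟩)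
        right_inv := fun t => by
          rcases t with ⟨t1, ht⟩
          apply Subtype.ext
          show e ⟨i, Fin.cast (congrArg n ht) (e.symm t1).2⟩ = t1
          conv_rhs => rw [← e.apply_symm_apply t1]
          congr 1
          refine Sigma.ext ht.symm ?_
          rw [Fin.cast_eq_cast]
          exact cast_heq _ _ }
    have hdet : (C'.toSquareBlock blk i).det
        = Matrix.det (Matrix.of fun a b : Fin (n i) => (B i (id b)).mulVec 1 (e ⟨i, a⟩)) := by
      rw [← Matrix.det_submatrix_equiv_self Ei (C'.toSquareBlock blk i)]
      congr 1
      ext a b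
      show C' (e ⟨i, a⟩) (e ⟨i, b⟩) = (B i b).mulVec 1 (e ⟨i, a⟩)
      show (if blk (e ⟨i, a⟩) = blk (e ⟨i, b⟩) then c (e ⟨i, a⟩) (e ⟨i, b⟩) else 0) = _
      rw [if_pos (by rw [hfib, hfib])]
      exact congrArg (fun x : (Σ j, Fin (n j)) => (B x.fst x.snd).mulVec 1 (e ⟨i, a⟩))
        (e.symm_apply_apply ⟨i, b⟩)
    rw [hdet]
    have hinj : Function.Injective (fun a : Fin (n i) => e ⟨i, a⟩) :=
      fun a b hab => sigma_mk_injective (β := fun j => Fin (n j)) (e.injective hab)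
    exact isUnit_iff_ne_zero.mp (hB i (n i) (fun a => e ⟨i, a⟩) id hinj Function.injective_id)
  intro h
  rw [h] at hcoeff
  simp at hcoeff
  exact hCne hcoeff.symm


open MvPolynomial

lemma measurePreserving_uncurry {α : Type*} [MeasurableSpace α] (μ : Measure α) [SigmaFinite μ]
    {ι₁ ι₂ : Type*} [Fintype ι₁] [Fintype ι₂] :
    MeasurePreserving (fun (ω : ι₁ → ι₂ → α) (p : ι₁ × ι₂) => ω p.1 p.2)
      (Measure.pi fun _ : ι₁ => Measure.pi fun _ : ι₂ => μ)
      (Measure.pi fun _ : ι₁ × ι₂ => μ) := by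
  have hmeas : Measurable (fun (ω : ι₁ → ι₂ → α) (p : ι₁ × ι₂) => ω p.1 p.2) :=
    measurable_pi_iff.mpr fun p => (measurable_pi_apply p.2).comp (measurable_pi_apply p.1)
  refine ⟨hmeas, ?_⟩
  refine (Measure.pi_eq fun s hs => ?_).symm
  rw [Measure.map_apply hmeas (MeasurableSet.univ_pi hs)]
  have hpre : (fun (ω : ι₁ → ι₂ → α) (p : ι₁ × ι₂) => ω p.1 p.2) ⁻¹' (Set.univ.pi s)
      = Set.univ.pi fun i => Set.univ.pi fun j => s (i, j) := by
    ext ω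
    simp only [Set.mem_preimage, Set.mem_univ_pi]
    exact ⟨fun h i => fun j => h (i, j), fun h p => h p.1 p.2⟩
  rw [hpre, Measure.pi_pi]
  simp_rw [Measure.pi_pi]
  exact (Fintype.prod_prod_type (f := fun p => μ (s p))).symm

lemma isDiag_mulVec {T : ℕ} (A : Matrix (Fin T) (Fin T) ℂ) (hA : A.IsDiag)
    (v : Fin T → ℂ) (t : Fin T) :
    A.mulVec v t = A.mulVec 1 t * v t := by
  have h1 : ∀ w : Fin T → ℂ, A.mulVec w t = A t t * w t := by
    intro w
    show ∑ u, A t u * w u = A t t * w t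
    rw [Finset.sum_eq_single t]
    · intro u _ hu
      rw [hA (Ne.symm hu), zero_mul]
    · intro h; exact absurd (Finset.mem_univ t) h
  rw [h1, h1]
  simp

end Stmt10

open MeasureTheory

theorem stmt_10 (T m : ℕ) (hm : 0 < m) (hT : 0 < T)
    (n : Fin m → ℕ) (hn : ∀ i, 0 < n i) (hsum : ∑ i, n i = T)
    (e : (Σ i, Fin (n i)) ≃ Fin T)
    (B : (i : Fin m) → Fin (n i) → Matrix (Fin T) (Fin T) ℂ)
    (hdiag : ∀ i k, (B i k).IsDiag)
    -- every square submatrix of Bᵢ = [B_{i,1}·𝟙, …, B_{i,nᵢ}·𝟙] is invertible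
    (hB : ∀ (i : Fin m) (s : ℕ) (ρ : Fin s → Fin T) (σ : Fin s → Fin (n i)),
      Function.Injective ρ → Function.Injective σ →
      IsUnit (Matrix.det (Matrix.of fun a b => (B i (σ b)).mulVec 1 (ρ a))))
    -- the real and imaginary parts of all coordinates of the Ξᵢ are i.i.d. with common
    -- law ν absolutely continuous w.r.t. Lebesgue measure; this is modeled by the
    -- canonical product space Ω = Fin m → Fin T → ℝ × ℝ with the product measure
    (ν : Measure ℝ) [IsProbabilityMeasure ν] (hν : ν ≪ volume) :
    (Measure.pi fun _ : Fin m => Measure.pi fun _ : Fin T => ν.prod ν)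
      {ω : Fin m → Fin T → ℝ × ℝ |
        IsUnit (Matrix.det (Matrix.of fun (t s : Fin T) =>
          (B (e.symm s).1 (e.symm s).2).mulVec
            (fun u => Complex.mk (ω (e.symm s).1 u).1 (ω (e.symm s).1 u).2) t))} = 1 := by
  classical
  open MvPolynomial in
  set P : MvPolynomial (Fin m × Fin T) ℂ :=
    Matrix.det (Matrix.of fun t s : Fin T =>
      (MvPolynomial.C ((B (e.symm s).1 (e.symm s).2).mulVec 1 t)) * MvPolynomial.X ((e.symm s).1, t)) with hPdef
  have hP : P ≠ 0 := Stmt10.det_poly_ne_zero T m n e B hB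
  -- evaluation of P
  have heval : ∀ ξ : Fin m × Fin T → ℂ,
      MvPolynomial.eval ξ P = Matrix.det (Matrix.of fun t s : Fin T =>
        (B (e.symm s).1 (e.symm s).2).mulVec (fun u => ξ ((e.symm s).1, u)) t) := by
    intro ξ
    rw [hPdef, RingHom.map_det]
    congr 1
    ext t s
    show MvPolynomial.eval ξ
        ((MvPolynomial.C ((B (e.symm s).1 (e.symm s).2).mulVec 1 t))
          * MvPolynomial.X ((e.symm s).1, t)) = _
    rw [map_mul, MvPolynomial.eval_C, MvPolynomial.eval_X]
    show _ = (B (e.symm s).1 (e.symm s).2).mulVec (fun u => ξ ((e.symm s).1, u)) t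
    rw [Stmt10.isDiag_mulVec _ (hdiag _ _) (fun u => ξ ((e.symm s).1, u)) t]
  -- the measures
  set κ : Measure (ℝ × ℝ) := ν.prod ν with hκ
  set f : ℝ × ℝ → ℂ := fun p => Complex.mk p.1 p.2 with hf
  have hfe : f = ⇑Complex.measurableEquivRealProd.symm := by
    funext p
    rw [Complex.measurableEquivRealProd_symm_apply]
  have hfmeas : Measurable f := by
    rw [hfe]; exact Complex.measurableEquivRealProd.symm.measurable
  set μc : Measure ℂ := κ.map f with hμc
  haveI : IsProbabilityMeasure κ := by rw [hκ]; infer_instance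
  haveI : IsProbabilityMeasure μc := Measure.isProbabilityMeasure_map hfmeas.aemeasurable
  haveI : IsProbabilityMeasure (Measure.pi fun _ : Fin T => κ) := inferInstance
  haveI : IsProbabilityMeasure (Measure.pi fun _ : Fin m => Measure.pi fun _ : Fin T => κ) :=
    inferInstance
  have hac : μc ≪ volume := by
    have h1 : κ ≪ (volume : Measure (ℝ × ℝ)) := by
      rw [Measure.volume_eq_prod]
      exact hν.prod hν
    have h2 : μc ≪ Measure.map f volume := h1.map hfmeas
    have h3 : Measure.map f (volume : Measure (ℝ × ℝ)) = volume := by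
      rw [hfe]
      exact (MeasurePreserving.symm _ Complex.volume_preserving_equiv_real_prod).map_eq
    rwa [h3] at h2
  -- the measure preserving map
  set Φ : (Fin m → Fin T → ℝ × ℝ) → (Fin m × Fin T → ℂ) := fun ω p => f (ω p.1 p.2) with hΦdef
  have hΦ : MeasurePreserving Φ
      (Measure.pi fun _ : Fin m => Measure.pi fun _ : Fin T => κ)
      (Measure.pi fun _ : Fin m × Fin T => μc) := by
    have hΦ1 := Stmt10.measurePreserving_uncurry (ι₁ := Fin m) (ι₂ := Fin T) κ
    have hΦ2 := measurePreserving_pi (fun _ : Fin m × Fin T => κ) (fun _ : Fin m × Fin T => μc)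
      (f := fun _ => f) (fun _ => ⟨hfmeas, rfl⟩)
    exact hΦ2.comp hΦ1
  -- the zero set
  set Sc : Set (Fin m × Fin T → ℂ) := {x | MvPolynomial.eval x P = 0} with hSc
  have hScMeas : MeasurableSet Sc := (Stmt10.measurable_eval P) (measurableSet_singleton 0)
  have hSc0 : (Measure.pi fun _ : Fin m × Fin T => μc) Sc = 0 := by
    set F := Fintype.equivFin (Fin m × Fin T) with hF
    have hpc := measurePreserving_piCongrLeft (fun _ : Fin m × Fin T => μc) F.symm
    have hpre := (hpc.measure_preimage hScMeas.nullMeasurableSet).symm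
    have hcoef : ∀ (y : Fin (Fintype.card (Fin m × Fin T)) → ℂ),
        ⇑(MeasurableEquiv.piCongrLeft (fun _ : Fin m × Fin T => ℂ) F.symm) y = y ∘ ⇑F := by
      intro y
      funext i
      show (Equiv.piCongrLeft (fun _ : Fin m × Fin T => ℂ) F.symm) y i = y (F i)
      conv_lhs => rw [show i = F.symm (F i) from (F.symm_apply_apply i).symm]
      exact Equiv.piCongrLeft_apply_apply (fun _ => ℂ) F.symm y (F i)
    have hsetEq : (⇑(MeasurableEquiv.piCongrLeft (fun _ : Fin m × Fin T => ℂ) F.symm)) ⁻¹' Sc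
        = {y | MvPolynomial.eval y (MvPolynomial.rename (⇑F) P) = 0} := by
      ext y
      simp only [Set.mem_preimage, hSc, Set.mem_setOf_eq, MvPolynomial.eval_rename, hcoef y]
    have hren : MvPolynomial.rename (⇑F) P ≠ 0 := by
      intro h
      exact hP (MvPolynomial.rename_injective (⇑F) F.injective (by rw [h, map_zero]))
    have hz := Stmt10.measure_eval_zero (Fintype.card (Fin m × Fin T))
      (fun _ => μc) (fun _ => inferInstance) (fun _ => hac)
      (MvPolynomial.rename (⇑F) P) hren
    rw [hpre, hsetEq, hz]
  -- conclude
  have hmainEq : {ω : Fin m → Fin T → ℝ × ℝ |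
        IsUnit (Matrix.det (Matrix.of fun (t s : Fin T) =>
          (B (e.symm s).1 (e.symm s).2).mulVec
            (fun u => Complex.mk (ω (e.symm s).1 u).1 (ω (e.symm s).1 u).2) t))}
      = (Φ ⁻¹' Sc)ᶜ := by
    ext ω
    simp only [Set.mem_setOf_eq, Set.mem_compl_iff, Set.mem_preimage, hSc, isUnit_iff_ne_zero]
    rw [heval (Φ ω)]
  rw [hmainEq]
  have hmeasPre : MeasurableSet (Φ ⁻¹' Sc) := hΦ.measurable hScMeas
  rw [prob_compl_eq_one_iff hmeasPre]
  rw [hΦ.measure_preimage hScMeas.nullMeasurableSet]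
  exact hSc0
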